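/- arXiv:1512.05794 — 2 statements merged into one kernel-verified Lean document; each statement's English description precedes it below -/
import Mathlib

section
/- Let d ≥ 1 be an integer and let Λ ⊂ ℝ^d be a full-rank lattice (a discrete subgroup spanning ℝ^d) of covolume 1. Then there exists a constant γ(Λ) ∈ ℝ such that, as R → ∞, Σ_{v ∈ Λ, 0 < ‖v‖ ≤ R} ‖v‖^{−d} = (2π^{d/2}/Γ(d/2)) · (log R + γ(Λ)) + o(1), where ‖·‖ is the Euclidean norm. (When d = 1 and Λ = ℤ, γ(Λ) is the Euler–Mascheroni constant.) -/
open MeasureTheory Filter Real Set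

private theorem aux_pow_diff (d : ℕ) {a b : ℝ} (hb : 0 ≤ b) (hba : b ≤ a) :
    a ^ d - b ^ d ≤ d * (a - b) * a ^ (d - 1) := by
  induction d with
  | zero => simp
  | succ n ih =>
    have ha : 0 ≤ a := hb.trans hba
    rcases Nat.eq_zero_or_pos n with rfl | hn
    · simp
    · have h2 : a * (a ^ n - b ^ n) ≤ n * (a - b) * a ^ n := by
        calc a * (a ^ n - b ^ n) ≤ a * (n * (a - b) * a ^ (n-1)) := by
              apply mul_le_mul_of_nonneg_left ih ha
          _ = n * (a - b) * (a * a ^ (n-1)) := by ring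
          _ = n * (a - b) * a ^ n := by
              rw [← pow_succ']; congr 2; omega
      have h3 : (a - b) * b ^ n ≤ (a - b) * a ^ n := by
        apply mul_le_mul_of_nonneg_left (pow_le_pow_left₀ hb hba n) (by linarith)
      have h4 : a ^ (n+1) - b ^ (n+1) ≤ (n+1) * (a - b) * a ^ n := by
        have h1 : a ^ (n+1) - b ^ (n+1) = a * (a ^ n - b ^ n) + (a - b) * b ^ n := by ring
        rw [h1]; push_cast; nlinarith
      simpa using h4

private theorem aux_ftc (d : ℕ) (hd : 1 ≤ d) (c R : ℝ) (hc : 0 < c) (hcR : c ≤ R) :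
    ∫ t in c..R, (d : ℝ) * t ^ (-(d:ℤ)-1) = c ^ (-(d:ℤ)) - R ^ (-(d:ℤ)) := by
  rw [intervalIntegral.integral_const_mul, integral_zpow]
  · have : (-(d:ℤ)-1) + 1 = -(d:ℤ):= by ring
    rw [this]
    have hdne : (d:ℝ) ≠ 0 := by positivity
    push_cast
    field_simp
    rw [show (-(d:ℝ) - 1 + 1) = -(d:ℝ) by ring, mul_comm (d:ℝ), mul_div_assoc, div_neg,
      div_self hdne]
    ring
  · right
    refine ⟨by omega, fun h => ?_⟩
    simp [Set.uIcc_of_le hcR] at h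
    linarith [h.1]

private theorem aux_indicator (g : ℝ → ℝ) (r0 c R : ℝ) (h0 : r0 < c) (hcR : c ≤ R)
    (hg : IntegrableOn g (Ioc r0 R)) :
    ∫ t in r0..R, Set.indicator (Ici c) g t = ∫ t in c..R, g t := by
  rw [intervalIntegral.integral_of_le (le_trans h0.le hcR),
    intervalIntegral.integral_of_le hcR,
    setIntegral_indicator measurableSet_Ici]
  have : Ioc r0 R ∩ Ici c = Icc c R := by
    ext t; simp only [mem_inter_iff, mem_Ioc, mem_Ici, mem_Icc]
    exact ⟨fun ⟨⟨_, h2⟩, h3⟩ => ⟨h3, h2⟩, fun ⟨h1, h2⟩ => ⟨⟨lt_of_lt_of_le h0 h1, h2⟩, h1⟩⟩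
  rw [this, integral_Icc_eq_integral_Ioc]

private theorem aux_count {d : ℕ} (Λ : Submodule ℤ (EuclideanSpace ℝ (Fin d)))
    (D : Set (EuclideanSpace ℝ (Fin d))) (hD : MeasurableSet D)
    (hvol : volume D = 1)
    (huniq : ∀ x : EuclideanSpace ℝ (Fin d), ∃! v : Λ, x - (v : EuclideanSpace ℝ (Fin d)) ∈ D)
    (A : Finset (EuclideanSpace ℝ (Fin d))) (hA : ∀ v ∈ A, v ∈ Λ) :
    volume (⋃ v ∈ A, (fun x => x - v) ⁻¹' D) = A.card := by
  rw [measure_biUnion_finset ?_ ?_]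
  · simp_rw [fun v : EuclideanSpace ℝ (Fin d) =>
      show volume ((fun x => x - v) ⁻¹' D) = volume D by
        simpa [sub_eq_add_neg] using measure_preimage_add_right volume (-v) D]
    simp [hvol]
  · rintro v hv w hw hvw
    simp only [Function.onFun]
    rw [Set.disjoint_left]
    rintro x hxv hxw
    obtain ⟨u, -, hu⟩ := huniq x
    have h1 : (⟨v, hA v hv⟩ : Λ) = ⟨w, hA w hw⟩ := by
      rw [hu ⟨v, hA v hv⟩ hxv, hu ⟨w, hA w hw⟩ hxw]
    exact hvw (congrArg Subtype.val h1)
  · intro v _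
    exact hD.preimage (measurable_id.sub_const v)

private theorem aux_const (d : ℕ) (hd : 1 ≤ d) :
    (2 : ℝ) * π ^ ((d : ℝ) / 2) / Real.Gamma ((d : ℝ) / 2)
      = d * (Real.sqrt π ^ d / Real.Gamma ((d : ℝ) / 2 + 1)) := by
  rw [Real.Gamma_add_one (by positivity), ← Real.rpow_natCast (Real.sqrt π) d,
    Real.sqrt_eq_rpow, ← Real.rpow_mul pi_pos.le]
  have h1 : Real.Gamma ((d:ℝ)/2) ≠ 0 := (Real.Gamma_pos_of_pos (by positivity)).ne'
  field_simp

private theorem aux_ballvol (d : ℕ) (hd : 1 ≤ d) {r : ℝ} (hr : 0 ≤ r) :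
    volume (Metric.ball (0 : EuclideanSpace ℝ (Fin d)) r)
      = ENNReal.ofReal ((Real.sqrt π ^ d / Real.Gamma ((d:ℝ) / 2 + 1)) * r ^ d)
    ∧ volume (Metric.closedBall (0 : EuclideanSpace ℝ (Fin d)) r)
      = ENNReal.ofReal ((Real.sqrt π ^ d / Real.Gamma ((d:ℝ) / 2 + 1)) * r ^ d) := by
  have : Nonempty (Fin d) := Fin.pos_iff_nonempty.mp (by omega)
  have hω : 0 ≤ Real.sqrt π ^ d / Real.Gamma ((d:ℝ) / 2 + 1) := by
    have := Real.Gamma_pos_of_pos (show (0:ℝ) < (d:ℝ)/2 + 1 by positivity)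
    positivity
  have hcast : ((Fintype.card (Fin d) : ℝ) / 2 + 1) = ((d:ℝ)/2 + 1) := by
    simp
  constructor
  · rw [EuclideanSpace.volume_ball, Fintype.card_fin,
      ENNReal.ofReal_mul hω, ENNReal.ofReal_pow hr, mul_comm]
  · rw [EuclideanSpace.volume_closedBall, Fintype.card_fin,
      ENNReal.ofReal_mul hω, ENNReal.ofReal_pow hr, mul_comm]

/-- Error bound from sandwich counting. -/
private theorem aux_errbound (d : ℕ) (hd : 1 ≤ d) {ω ρ Nt t : ℝ} (hω : 0 < ω) (hρ : 1 ≤ ρ)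
    (ht : ρ ≤ t) (hN : 0 ≤ Nt) (h1 : ω * (t - ρ)^d ≤ Nt + 1) (h2 : Nt + 1 ≤ ω * (t + ρ)^d) :
    |Nt - ω * t ^ d| ≤ (ω * d * ρ * 2^(d-1) + 1) * t ^ (d-1) := by
  have ht1 : 1 ≤ t := hρ.trans ht
  have ht0 : 0 ≤ t := by linarith
  have htd1 : (1:ℝ) ≤ t ^ (d-1) := one_le_pow₀ ht1
  have hup : (t + ρ)^d - t^d ≤ d * ρ * (t + ρ)^(d-1) := by
    have := aux_pow_diff d (a := t + ρ) (b := t) ht0 (by linarith)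
    calc (t + ρ)^d - t^d ≤ d * (t + ρ - t) * (t + ρ)^(d-1) := this
      _ = d * ρ * (t + ρ)^(d-1) := by ring_nf
  have hlow : t^d - (t - ρ)^d ≤ d * ρ * t^(d-1) := by
    have := aux_pow_diff d (a := t) (b := t - ρ) (by linarith) (by linarith)
    calc t^d - (t - ρ)^d ≤ d * (t - (t - ρ)) * t^(d-1) := this
      _ = d * ρ * t^(d-1) := by ring_nf
  have h2t : (t + ρ)^(d-1) ≤ 2^(d-1) * t^(d-1) := by
    calc (t + ρ)^(d-1) ≤ (2*t)^(d-1) := pow_le_pow_left₀ (by linarith) (by linarith) _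
      _ = 2^(d-1) * t^(d-1) := mul_pow 2 t (d-1)
  have h1' : 1 ≤ (2:ℝ)^(d-1) := one_le_pow₀ (by norm_num)
  have hdρ : (0:ℝ) ≤ (d:ℝ) * ρ := by positivity
  have hc : (0:ℝ) ≤ ω * d * ρ * t^(d-1) := by positivity
  have hmid : ω * ((d:ℝ) * ρ * t^(d-1)) ≤ ω * d * ρ * 2^(d-1) * t^(d-1) := by
    nlinarith [mul_le_mul_of_nonneg_left h1' hc]
  have hmid2 : (d:ℝ) * ρ * (t + ρ)^(d-1) ≤ (d:ℝ) * ρ * (2^(d-1) * t^(d-1)) := by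
    nlinarith [mul_le_mul_of_nonneg_left h2t hdρ]
  rw [abs_le]
  constructor
  · have key : ω * t^d - Nt ≤ ω * ((d:ℝ) * ρ * t^(d-1)) + 1 := by nlinarith [hω.le]
    nlinarith [htd1]
  · have key : Nt - ω * t^d ≤ ω * ((t+ρ)^d - t^d) := by nlinarith
    have key2 : ω * ((t+ρ)^d - t^d) ≤ ω * ((d:ℝ) * ρ * (2^(d-1) * t^(d-1))) :=
      mul_le_mul_of_nonneg_left (hup.trans hmid2) hω.le
    nlinarith [htd1]

set_option maxHeartbeats 1000000 in
/-- **Lattice sum asymptotics.** Let `Λ ⊆ ℝ^d` be a full-rank lattice of covolume `1`.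
Then there is a constant `γ(Λ)` such that, as `R → ∞`,
`∑_{v ∈ Λ, 0 < ‖v‖ ≤ R} ‖v‖⁻ᵈ = (2 π^{d/2} / Γ(d/2)) (log R + γ(Λ)) + o(1)`. -/
theorem lattice_sum_asymptotics (d : ℕ) (hd : 1 ≤ d)
    (Λ : Submodule ℤ (EuclideanSpace ℝ (Fin d)))
    [DiscreteTopology Λ] [IsZLattice ℝ Λ]
    (hcov : ZLattice.covolume Λ = 1) :
    ∃ γΛ : ℝ, Tendsto
      (fun R : ℝ =>
        (∑ᶠ (v : EuclideanSpace ℝ (Fin d)) (_ : v ∈ Λ ∧ v ≠ 0 ∧ ‖v‖ ≤ R),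
          ‖v‖ ^ (-(d : ℝ)))
        - (2 * π ^ ((d : ℝ) / 2) / Real.Gamma ((d : ℝ) / 2)) * (Real.log R + γΛ))
      atTop (nhds 0) := by
  classical
  set E := EuclideanSpace ℝ (Fin d)
  -- fundamental domain
  have : Module.Finite ℤ Λ := ZLattice.module_finite ℝ Λ
  have : Module.Free ℤ Λ := ZLattice.module_free ℝ Λ
  set b := Module.Free.chooseBasis ℤ Λ with hb
  set D := ZSpan.fundamentalDomain (b.ofZLatticeBasis ℝ) with hD
  have hDmeas : MeasurableSet D := ZSpan.fundamentalDomain_measurableSet _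
  have hDbdd : Bornology.IsBounded D := ZSpan.fundamentalDomain_isBounded _
  have hDfin : volume D ≠ ⊤ := hDbdd.measure_lt_top.ne
  have hDvol : volume D = 1 := by
    have h1 : ZLattice.covolume Λ = (volume D).toReal :=
      ZLattice.covolume_eq_measure_fundamentalDomain Λ volume
        (ZLattice.isAddFundamentalDomain b volume)
    rw [← ENNReal.ofReal_toReal hDfin, ← h1, hcov]; simp
  have huniq : ∀ x : E, ∃! v : Λ, x - (v : E) ∈ D := by
    intro x
    have h := ZSpan.exist_unique_vadd_mem_fundamentalDomain (b.ofZLatticeBasis ℝ) x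
    rw [Module.Basis.ofZLatticeBasis_span ℝ] at h
    obtain ⟨v, hv, hv'⟩ := h
    have hvadd : ∀ (u : Λ), (u +ᵥ x : E) = ↑u + x := fun u => rfl
    refine ⟨-v, ?_, fun w hw => ?_⟩
    · show x - ((-v : Λ) : E) ∈ D
      have heq : x - ((-v : Λ) : E) = (v : E) + x := by push_cast; abel
      rw [heq, ← hvadd v]; exact hv
    · show w = -v
      have h1 : -w = v := by
        refine hv' (-w) ?_
        show ((-w : Λ) +ᵥ x : E) ∈ _
        rw [hvadd]
        have heq2 : ((-w : Λ) : E) + x = x - ↑w := by push_cast; abel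
        rw [heq2]; exact hw
      rw [← h1, neg_neg]
  clear_value b D
  -- bound on the fundamental domain
  obtain ⟨ρ0, hρ0⟩ := isBounded_iff_forall_norm_le.mp hDbdd
  set ρ : ℝ := max ρ0 1 with hρdef
  have hρ1 : (1:ℝ) ≤ ρ := le_max_right _ _
  have hρ0' : (0:ℝ) < ρ := lt_of_lt_of_le one_pos hρ1
  have hρD : ∀ x ∈ D, ‖x‖ ≤ ρ := fun x hx => (hρ0 x hx).trans (le_max_left _ _)
  clear_value ρ
  -- volume constant
  set ω : ℝ := Real.sqrt π ^ d / Real.Gamma ((d:ℝ) / 2 + 1) with hωdef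
  have hωpos : 0 < ω := by
    have h1 := Real.Gamma_pos_of_pos (show (0:ℝ) < (d:ℝ)/2 + 1 by positivity)
    have h2 : (0:ℝ) < Real.sqrt π ^ d := pow_pos (Real.sqrt_pos.mpr pi_pos) d
    exact div_pos h2 h1
  have hball : ∀ r : ℝ, 0 ≤ r →
      volume (Metric.ball (0 : E) r) = ENNReal.ofReal (ω * r ^ d)
      ∧ volume (Metric.closedBall (0 : E) r) = ENNReal.ofReal (ω * r ^ d) := by
    intro r hr
    rw [hωdef]
    exact aux_ballvol d hd hr
  set C : ℝ := 2 * π ^ ((d:ℝ)/2) / Real.Gamma ((d:ℝ)/2) with hCdef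
  have hC : C = d * ω := by rw [hCdef, hωdef]; exact aux_const d hd
  clear_value ω C
  -- finiteness and the counting function
  have Sfin : ∀ R : ℝ, {v : E | v ∈ Λ ∧ v ≠ 0 ∧ ‖v‖ ≤ R}.Finite := by
    intro R
    have : DiscreteTopology Λ.toAddSubgroup := (inferInstance : DiscreteTopology Λ)
    have hfin : ((Metric.closedBall (0:E) R : Set E) ∩ Λ.toAddSubgroup).Finite :=
      Metric.finite_isBounded_inter_isClosed DiscreteTopology.isDiscrete
        Metric.isBounded_closedBall inferInstance
    refine hfin.subset ?_
    rintro v ⟨h1, h2, h3⟩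
    exact ⟨mem_closedBall_zero_iff.mpr h3, h1⟩
  set A : ℝ → Finset E := fun R => (Sfin R).toFinset with hA
  have memA : ∀ {R : ℝ} {v : E}, v ∈ A R ↔ v ∈ Λ ∧ v ≠ 0 ∧ ‖v‖ ≤ R := by
    intro R v; simp [hA, (Sfin R).mem_toFinset]
  set N : ℝ → ℝ := fun R => ((A R).card : ℝ) with hN
  have hNcard : ∀ R : ℝ, N R = ((A R).card : ℝ) := fun _ => rfl
  clear_value A N
  have hN0 : ∀ R, 0 ≤ N R := fun R => by rw [hNcard R]; exact Nat.cast_nonneg _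
  have hNmono : Monotone N := by
    intro s t hst
    rw [hNcard s, hNcard t]
    refine Nat.cast_le.mpr (Finset.card_le_card ?_)
    intro v hv
    obtain ⟨h1, h2, h3⟩ := memA.mp hv
    exact memA.mpr ⟨h1, h2, h3.trans hst⟩
  -- counting estimate
  have hcount : ∀ r : ℝ, ρ ≤ r →
      ω * (r - ρ)^d ≤ N r + 1 ∧ N r + 1 ≤ ω * (r + ρ)^d := by
    intro r hr
    have hr0 : (0:ℝ) < r := lt_of_lt_of_le hρ0' hr
    set A' : Finset E := insert (0:E) (A r) with hA'
    have h0notin : (0:E) ∉ A r := fun h => (memA.mp h).2.1 rfl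
    have hcard : ((A'.card : ℝ)) = N r + 1 := by
      rw [hA', Finset.card_insert_of_notMem h0notin, hNcard r]; push_cast; ring
    have hA'Λ : ∀ v ∈ A', v ∈ Λ := by
      intro v hv
      rcases Finset.mem_insert.mp hv with h | h
      · rw [h]; exact zero_mem Λ
      · exact (memA.mp h).1
    have hvolU := aux_count Λ D hDmeas hDvol huniq A' hA'Λ
    set U : Set E := ⋃ v ∈ A', (fun x => x - v) ⁻¹' D with hU
    have hsub2 : U ⊆ Metric.closedBall (0:E) (r + ρ) := by
      intro x hx
      simp only [hU, mem_iUnion, mem_preimage] at hx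
      obtain ⟨v, hv, hxD⟩ := hx
      have hvr : ‖v‖ ≤ r := by
        rcases Finset.mem_insert.mp hv with h | h
        · rw [h]; simpa using hr0.le
        · exact (memA.mp h).2.2
      have : ‖x‖ ≤ ‖x - v‖ + ‖v‖ := by
        calc ‖x‖ = ‖(x - v) + v‖ := by rw [sub_add_cancel]
          _ ≤ ‖x - v‖ + ‖v‖ := norm_add_le _ _
      exact mem_closedBall_zero_iff.mpr (by linarith [hρD _ hxD])
    have hsub1 : Metric.ball (0:E) (r - ρ) ⊆ U := by
      intro x hx
      rw [Metric.mem_ball, dist_zero_right] at hx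
      obtain ⟨v, hvD, -⟩ := huniq x
      have hvr : ‖(v : E)‖ ≤ r := by
        have : ‖(v:E)‖ = ‖x - (x - (v:E))‖ := by rw [sub_sub_cancel]
        rw [this]
        calc ‖x - (x - (v:E))‖ ≤ ‖x‖ + ‖x - (v:E)‖ := norm_sub_le _ _
          _ ≤ r := by linarith [hρD _ hvD]
      have hvmem : (v : E) ∈ A' := by
        by_cases h0 : (v : E) = 0
        · rw [hA', h0]; exact Finset.mem_insert_self _ _
        · exact Finset.mem_insert_of_mem (memA.mpr ⟨v.2, h0, hvr⟩)
      simp only [hU, mem_iUnion, mem_preimage]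
      exact ⟨(v:E), hvmem, hvD⟩
    have hb1 := (hball (r - ρ) (by linarith)).1
    have hb2 := (hball (r + ρ) (by linarith)).2
    have hle1 : ENNReal.ofReal (ω * (r - ρ)^d) ≤ (A'.card : ENNReal) := by
      rw [← hvolU, ← hb1]; exact measure_mono hsub1
    have hle2 : (A'.card : ENNReal) ≤ ENNReal.ofReal (ω * (r + ρ)^d) := by
      rw [← hvolU, ← hb2]; exact measure_mono hsub2
    rw [← ENNReal.ofReal_natCast] at hle1 hle2
    constructor
    · have := (ENNReal.ofReal_le_ofReal_iff (Nat.cast_nonneg _)).mp hle1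
      rw [hcard] at this; exact this
    · have h2 : (0:ℝ) ≤ ω * (r + ρ)^d := mul_nonneg hωpos.le (pow_nonneg (by linarith) d)
      have := (ENNReal.ofReal_le_ofReal_iff h2).mp hle2
      rw [hcard] at this; exact this
  -- minimal norm
  obtain ⟨rmin, hrmin0, hrmin1, hrminlb⟩ :
      ∃ rmin:ℝ, 0 < rmin ∧ rmin ≤ 1 ∧ ∀ v ∈ Λ, v ≠ (0:E) → rmin ≤ ‖v‖ := by
    by_cases hT : (A 1).Nonempty
    · obtain ⟨v0, hv0mem, hv0⟩ := (A 1).exists_min_image (fun v => ‖v‖) hT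
      obtain ⟨hv0Λ, hv0ne, hv0le⟩ := memA.mp hv0mem
      refine ⟨‖v0‖, norm_pos_iff.mpr hv0ne, hv0le, fun v hv hvne => ?_⟩
      rcases le_or_gt ‖v‖ 1 with h | h
      · exact hv0 v (memA.mpr ⟨hv, hvne, h⟩)
      · linarith
    · refine ⟨1, one_pos, le_refl 1, fun v hv hvne => ?_⟩
      by_contra hcon
      push_neg at hcon
      exact hT ⟨v, memA.mpr ⟨hv, hvne, hcon.le⟩⟩
  set r0 : ℝ := rmin / 2 with hr0def
  have hr00 : 0 < r0 := by rw [hr0def]; linarith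

  have hr0lt : ∀ v ∈ Λ, v ≠ (0:E) → r0 < ‖v‖ := fun v hv hvne => by
    have := hrminlb v hv hvne; rw [hr0def]; linarith
  have hr0ρ : r0 < ρ := by rw [hr0def]; linarith
  clear_value r0
  -- the integrand of the Abel-summation integral
  set g : ℝ → ℝ := fun t => (d:ℝ) * t ^ (-(d:ℤ)-1) with hgdef
  have hzpow_eq : ∀ t : ℝ, t ^ (-(d:ℤ)-1) = ((t^(d+1))⁻¹ : ℝ) := by
    intro t
    rw [← zpow_natCast t (d+1), ← zpow_neg]
    congr 1; push_cast; ring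
  have hgcont : ∀ R : ℝ, ContinuousOn g (Icc r0 R) := by
    intro R
    apply continuousOn_const.mul
    apply ContinuousOn.zpow₀ continuousOn_id
    intro t ht
    exact Or.inl (ne_of_gt (lt_of_lt_of_le hr00 ht.1))
  have hgint : ∀ R : ℝ, IntegrableOn g (Ioc r0 R) := fun R =>
    ((hgcont R).integrableOn_Icc).mono_set Ioc_subset_Icc_self
  have hzpowmeas : Measurable (fun t : ℝ => t ^ (-(d:ℤ)-1)) := by
    have : (fun t : ℝ => t ^ (-(d:ℤ)-1)) = fun t : ℝ => ((t^(d+1))⁻¹ : ℝ) := funext hzpow_eq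
    rw [this]; exact (measurable_id.pow_const (d+1)).inv
  have hgmeas : Measurable g := hzpowmeas.const_mul _
  have hNmeas : Measurable N := hNmono.measurable
  set herr : ℝ → ℝ := fun t => (N t - ω * t^d) * g t with hherr
  have hherrmeas : Measurable herr :=
    (hNmeas.sub ((measurable_id.pow_const d).const_mul ω)).mul hgmeas
  -- the error bound
  set K' : ℝ := ω * d * ρ * 2^(d-1) + 1 with hK'def
  have hK'pos : 0 < K' := by
    have h1 : (0:ℝ) ≤ ω * d * ρ * 2^(d-1) :=
      mul_nonneg (mul_nonneg (mul_nonneg hωpos.le (Nat.cast_nonneg d)) hρ0'.le) (by positivity)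
    rw [hK'def]; linarith
  have hK' : ∀ t : ℝ, ρ ≤ t → |N t - ω * t^d| ≤ K' * t^(d-1) := fun t ht =>
    aux_errbound d hd hωpos hρ1 ht (hN0 t) (hcount t ht).1 (hcount t ht).2
  set B : ℝ := N ρ + ω * ρ^d with hBdef
  have hBpos : 0 < B := add_pos_of_nonneg_of_pos (hN0 ρ) (mul_pos hωpos (pow_pos hρ0' d))
  set C2 : ℝ := max (K' * d) (B * d * (r0^(d+1))⁻¹ * ρ^2) with hC2def
  have hbound : ∀ t ∈ Ioi r0, |herr t| ≤ C2 * (t^2)⁻¹ := by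
    intro t ht
    rw [mem_Ioi] at ht
    have ht0 : 0 < t := hr00.trans ht
    have hgt_eq : g t = (d:ℝ) * (t^(d+1))⁻¹ := by rw [hgdef]; dsimp only; rw [hzpow_eq]
    have hgt0 : 0 ≤ g t := by rw [hgt_eq]; positivity
    have habs : |herr t| = |N t - ω * t^d| * g t := by
      rw [hherr]; dsimp only; rw [abs_mul, abs_of_nonneg hgt0]
    rcases le_or_gt ρ t with hcase | hcase
    · have h1 : |herr t| ≤ K' * t^(d-1) * g t := by
        rw [habs]; exact mul_le_mul_of_nonneg_right (hK' t hcase) hgt0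
      have h3 : t^(d-1) * ((t^(d+1))⁻¹ : ℝ) = (t^2)⁻¹ := by
        have hexp : d + 1 = (d-1) + 2 := by omega
        have ht0' : t ≠ 0 := ne_of_gt ht0
        rw [hexp, pow_add]
        field_simp
      have h2 : K' * t^(d-1) * g t = K' * d * (t^2)⁻¹ := by
        rw [hgt_eq]
        calc K' * t^(d-1) * ((d:ℝ) * (t^(d+1))⁻¹)
            = K' * d * (t^(d-1) * (t^(d+1))⁻¹) := by ring
          _ = K' * d * (t^2)⁻¹ := by rw [h3]
      calc |herr t| ≤ K' * d * (t^2)⁻¹ := by rw [← h2]; exact h1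
        _ ≤ C2 * (t^2)⁻¹ :=
            mul_le_mul_of_nonneg_right (le_max_left _ _) (by positivity)
    · have hNt : N t ≤ N ρ := hNmono hcase.le
      have hωt : ω * t^d ≤ ω * ρ^d :=
        mul_le_mul_of_nonneg_left (pow_le_pow_left₀ ht0.le hcase.le d) hωpos.le
      have habs2 : |N t - ω * t^d| ≤ B := by
        have hp1 : (0:ℝ) ≤ ω * t^d := mul_nonneg hωpos.le (pow_nonneg ht0.le d)
        have hp2 : (0:ℝ) ≤ ω * ρ^d := mul_nonneg hωpos.le (pow_nonneg hρ0'.le d)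
        rw [abs_le, hBdef]
        constructor
        · have := hN0 t; nlinarith [hN0 ρ]
        · nlinarith
      have hinv : ((t^(d+1))⁻¹ : ℝ) ≤ (r0^(d+1))⁻¹ := by
        have := pow_le_pow_left₀ hr00.le ht.le (d+1)
        exact inv_anti₀ (pow_pos hr00 _) this
      have hρt : 1 ≤ ρ^2 * (t^2)⁻¹ := by
        rw [← div_eq_mul_inv, le_div_iff₀ (pow_pos ht0 2)]
        nlinarith [hcase.le, ht0.le]
      have hBd : (0:ℝ) ≤ B * d := mul_nonneg hBpos.le (Nat.cast_nonneg d)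
      have hBdr : (0:ℝ) ≤ B * d * (r0^(d+1))⁻¹ :=
        mul_nonneg hBd (inv_nonneg.mpr (pow_nonneg hr00.le _))
      calc |herr t| = |N t - ω*t^d| * g t := habs
        _ ≤ B * g t := mul_le_mul_of_nonneg_right habs2 hgt0
        _ = B * d * (t^(d+1))⁻¹ := by rw [hgt_eq]; ring
        _ ≤ B * d * (r0^(d+1))⁻¹ := mul_le_mul_of_nonneg_left hinv hBd
        _ = B * d * (r0^(d+1))⁻¹ * 1 := by ring
        _ ≤ B * d * (r0^(d+1))⁻¹ * (ρ^2 * (t^2)⁻¹) := mul_le_mul_of_nonneg_left hρt hBdr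
        _ = (B * d * (r0^(d+1))⁻¹ * ρ^2) * (t^2)⁻¹ := by ring
        _ ≤ C2 * (t^2)⁻¹ :=
            mul_le_mul_of_nonneg_right (le_max_right _ _) (by positivity)
  -- integrability of the error term on [r0, ∞)
  have hintC : IntegrableOn (fun t : ℝ => C2 * (t^2)⁻¹) (Ioi r0) := by
    have h1 : IntegrableOn (fun t : ℝ => t ^ (-2:ℝ)) (Ioi r0) :=
      integrableOn_Ioi_rpow_of_lt (by norm_num) hr00
    have h2 : IntegrableOn (fun t : ℝ => C2 * t ^ (-2:ℝ)) (Ioi r0) := h1.const_mul C2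
    refine h2.congr_fun ?_ measurableSet_Ioi
    intro t ht
    rw [mem_Ioi] at ht
    have ht0 : 0 < t := hr00.trans ht
    show C2 * t ^ (-2:ℝ) = C2 * (t^2)⁻¹
    rw [show (-2:ℝ) = -((2:ℕ):ℝ) by norm_num, Real.rpow_neg ht0.le, Real.rpow_natCast]
  have hint : IntegrableOn herr (Ioi r0) := by
    refine Integrable.mono' hintC hherrmeas.aestronglyMeasurable.restrict ?_
    refine (ae_restrict_iff' measurableSet_Ioi).mpr (ae_of_all _ ?_)
    intro t ht
    rw [Real.norm_eq_abs]
    exact hbound t ht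
  -- the master identity
  have hmaster : ∀ R : ℝ, ρ ≤ R →
      (∑ v ∈ A R, ‖v‖ ^ (-(d:ℝ))) = N R * R ^ (-(d:ℤ)) + ∫ t in r0..R, N t * g t := by
    intro R hR
    have hr0R : r0 < R := hr0ρ.trans_le hR
    have step1 : ∀ v ∈ A R, ‖v‖ ^ (-(d:ℝ))
        = R ^ (-(d:ℤ)) + ∫ t in r0..R, Set.indicator (Ici ‖v‖) g t := by
      intro v hv
      obtain ⟨hvΛ, hvne, hvR⟩ := memA.mp hv
      have hv0 : 0 < ‖v‖ := norm_pos_iff.mpr hvne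
      rw [aux_indicator g r0 ‖v‖ R (hr0lt v hvΛ hvne) hvR (hgint R)]
      rw [hgdef]
      rw [aux_ftc d hd ‖v‖ R hv0 hvR]
      rw [Real.rpow_neg (norm_nonneg v), Real.rpow_natCast]
      simp only [zpow_neg, zpow_natCast]
      ring
    rw [Finset.sum_congr rfl step1, Finset.sum_add_distrib, Finset.sum_const,
      nsmul_eq_mul, ← intervalIntegral.integral_finset_sum]
    · congr 1
      · rw [hNcard R]
      apply intervalIntegral.integral_congr
      intro t ht
      rw [uIcc_of_le hr0R.le] at ht
      obtain ⟨ht1, ht2⟩ := ht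
      have hfilter : (A R).filter (fun v => ‖v‖ ≤ t) = A t := by
        ext v
        simp only [Finset.mem_filter]
        constructor
        · rintro ⟨hv, hvt⟩
          obtain ⟨h1', h2', h3'⟩ := memA.mp hv
          exact memA.mpr ⟨h1', h2', hvt⟩
        · intro hv
          obtain ⟨h1', h2', h3'⟩ := memA.mp hv
          exact ⟨memA.mpr ⟨h1', h2', h3'.trans ht2⟩, h3'⟩
      calc (∑ v ∈ A R, Set.indicator (Ici ‖v‖) g t)
          = ∑ v ∈ A R, if ‖v‖ ≤ t then g t else 0 := by
            refine Finset.sum_congr rfl fun v _ => ?_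
            rw [Set.indicator_apply]
            simp only [mem_Ici]
        _ = ∑ _v ∈ (A R).filter (fun v => ‖v‖ ≤ t), g t := (Finset.sum_filter _ _).symm
        _ = N t * g t := by rw [hfilter, Finset.sum_const, nsmul_eq_mul, hNcard t]
    · intro v _
      rw [intervalIntegrable_iff_integrableOn_Ioc_of_le hr0R.le]
      exact (hgint R).indicator measurableSet_Ici
  -- splitting off the logarithm
  have hsplit : ∀ R : ℝ, ρ ≤ R →
      ∫ t in r0..R, N t * g t
        = (∫ t in r0..R, herr t) + (ω * d) * (Real.log R - Real.log r0) := by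
    intro R hR
    have hr0R : r0 < R := hr0ρ.trans_le hR
    have hIlog : ∫ t in r0..R, (ω * (d:ℝ)) * t⁻¹ = (ω * d) * (Real.log R - Real.log r0) := by
      rw [intervalIntegral.integral_const_mul, integral_inv (by
        rw [Set.uIcc_of_le hr0R.le]
        intro hmem
        rw [Set.mem_Icc] at hmem
        linarith [hmem.1])]
      rw [Real.log_div (ne_of_gt (hr00.trans hr0R)) (ne_of_gt hr00)]
    have h_ii : IntervalIntegrable herr volume r0 R := by
      rw [intervalIntegrable_iff_integrableOn_Ioc_of_le hr0R.le]
      exact hint.mono_set Ioc_subset_Ioi_self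
    have hinv_ii : IntervalIntegrable (fun t : ℝ => (ω * (d:ℝ)) * t⁻¹) volume r0 R := by
      apply ContinuousOn.intervalIntegrable
      apply continuousOn_const.mul
      apply ContinuousOn.inv₀ continuousOn_id
      intro t ht
      rw [Set.uIcc_of_le hr0R.le] at ht
      exact ne_of_gt (lt_of_lt_of_le hr00 ht.1)
    have heq : EqOn (fun t => N t * g t) (fun t => herr t + (ω * (d:ℝ)) * t⁻¹) (uIcc r0 R) := by
      intro t ht
      rw [Set.uIcc_of_le hr0R.le] at ht
      have ht0 : 0 < t := lt_of_lt_of_le hr00 ht.1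
      have hpow : (t:ℝ)^(d:ℕ) * t ^ (-(d:ℤ)-1) = t⁻¹ := by
        rw [← zpow_natCast t d, ← zpow_add₀ (ne_of_gt ht0)]
        rw [show (d:ℤ) + (-(d:ℤ)-1) = -1 by ring, zpow_neg_one]
      dsimp only
      rw [hherr]; dsimp only
      rw [hgdef]; dsimp only
      linear_combination (ω * (d:ℝ)) * hpow
    rw [intervalIntegral.integral_congr heq, intervalIntegral.integral_add h_ii hinv_ii, hIlog]
  -- the constant
  have hdpos : (0:ℝ) < d := by
    have : (1:ℝ) ≤ d := by exact_mod_cast hd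
    linarith
  have hCpos : 0 < C := by rw [hC]; exact mul_pos hdpos hωpos
  set L : ℝ := ω + (∫ t in Ioi r0, herr t) - (ω * d) * Real.log r0 with hLdef
  refine ⟨L / C, ?_⟩
  have hev : ∀ᶠ R in atTop,
      (∑ᶠ (v : E) (_ : v ∈ Λ ∧ v ≠ 0 ∧ ‖v‖ ≤ R), ‖v‖ ^ (-(d:ℝ)))
        - C * (Real.log R + L / C)
      = (N R * R ^ (-(d:ℤ)) - ω) + ((∫ t in r0..R, herr t) - ∫ t in Ioi r0, herr t) := by
    filter_upwards [eventually_ge_atTop ρ] with R hR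
    have hfs : (∑ᶠ (v : E) (_ : v ∈ Λ ∧ v ≠ 0 ∧ ‖v‖ ≤ R), ‖v‖ ^ (-(d:ℝ)))
        = ∑ v ∈ A R, ‖v‖ ^ (-(d:ℝ)) := by
      rw [← finsum_mem_coe_finset, hA]
      simp only [Set.Finite.coe_toFinset]
      rfl
    rw [hfs, hmaster R hR, hsplit R hR]
    have hCL : C * (Real.log R + L / C) = C * Real.log R + L := by
      rw [mul_add, mul_div_cancel₀ _ (ne_of_gt hCpos)]
    rw [hCL, hC, hLdef]
    ring
  have T1 : Tendsto (fun R : ℝ => N R * R ^ (-(d:ℤ)) - ω) atTop (nhds 0) := by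
    apply squeeze_zero_norm' (a := fun R : ℝ => K' * R⁻¹)
    · filter_upwards [eventually_ge_atTop ρ] with R hR
      have hR0 : 0 < R := lt_of_lt_of_le hρ0' hR
      have hone : (R:ℝ)^(d:ℕ) * R ^ (-(d:ℤ)) = 1 := by
        rw [← zpow_natCast R d, ← zpow_add₀ (ne_of_gt hR0)]
        simp
      have heq2 : N R * R ^ (-(d:ℤ)) - ω = (N R - ω * R^d) * R ^ (-(d:ℤ)) := by
        linear_combination ω * hone
      rw [Real.norm_eq_abs, heq2, abs_mul]
      have hzp : |R ^ (-(d:ℤ))| = ((R^d)⁻¹ : ℝ) := by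
        rw [abs_of_nonneg (zpow_nonneg hR0.le _), zpow_neg, zpow_natCast]
      rw [hzp]
      have hRd : (R:ℝ)^d = R^(d-1) * R := by
        conv_lhs => rw [show d = (d-1) + 1 by omega]
        rw [pow_succ]
      calc |N R - ω * R^d| * ((R^d)⁻¹:ℝ) ≤ K' * R^(d-1) * (R^d)⁻¹ :=
            mul_le_mul_of_nonneg_right (hK' R hR) (inv_nonneg.mpr (pow_nonneg hR0.le d))
        _ = K' * R⁻¹ := by
            have h9 : (R:ℝ)^(d-1) ≠ 0 := ne_of_gt (pow_pos hR0 _)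
            have h10 : (R:ℝ) ≠ 0 := ne_of_gt hR0
            rw [hRd, mul_inv]
            field_simp
    · simpa using tendsto_inv_atTop_zero.const_mul K'
  have T2 : Tendsto (fun R : ℝ => (∫ t in r0..R, herr t) - ∫ t in Ioi r0, herr t)
      atTop (nhds 0) := by
    have h1 := intervalIntegral_tendsto_integral_Ioi r0 hint tendsto_id
    simpa using h1.sub_const (∫ t in Ioi r0, herr t)
  have Tφ := T1.add T2
  rw [add_zero] at Tφ
  exact Tendsto.congr' (EventuallyEq.symm hev) Tφ
end

section
/- Let d ∈ ℝ and let (ρ_n)_{n ∈ ℕ} be a sequence of complex numbers with ρ_n ≠ d/2 and Re ρ_n ≤ d/2 for all n, such that Σ_n (d − 2 Re ρ_n)/|ρ_n − d/2|² < ∞. Then for every ε > 0: (i) for every T > 0 the set {n : Re ρ_n ≤ d/2 − ε and |ρ_n − d/2| ≤ T} is finite, and (ii) its cardinality is o(T²) as T → ∞, i.e. #{n : Re ρ_n ≤ d/2 − ε, |ρ_n − d/2| ≤ T} / T² → 0. -/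
open Filter Complex

/-- Let `d ∈ ℝ` and `(ρ_n)` be complex numbers with `ρ_n ≠ d/2`, `Re ρ_n ≤ d/2`, and
`∑ (d - 2 Re ρ_n)/|ρ_n - d/2|² < ∞`. Then for every `ε > 0`: (i) for every `T > 0` the set
of `n` with `Re ρ_n ≤ d/2 - ε` and `|ρ_n - d/2| ≤ T` is finite, and (ii) its cardinality
is `o(T²)` as `T → ∞`. -/
theorem resonances_off_critical_line_little_o (d : ℝ) (ρ : ℕ → ℂ)
    (hne : ∀ n, ρ n ≠ (d / 2 : ℂ)) (hre : ∀ n, (ρ n).re ≤ d / 2)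
    (hsum : Summable fun n => (d - 2 * (ρ n).re) / ‖ρ n - (d / 2 : ℂ)‖ ^ 2)
    (ε : ℝ) (hε : 0 < ε) :
    (∀ T : ℝ, 0 < T →
        {n : ℕ | (ρ n).re ≤ d / 2 - ε ∧ ‖ρ n - (d / 2 : ℂ)‖ ≤ T}.Finite) ∧
      Tendsto
        (fun T : ℝ =>
          (({n : ℕ | (ρ n).re ≤ d / 2 - ε ∧
              ‖ρ n - (d / 2 : ℂ)‖ ≤ T}.ncard : ℝ)) / T ^ 2)
        atTop (nhds 0) := by
  set c : ℕ → ℝ := fun n => (d - 2 * (ρ n).re) / ‖ρ n - (d / 2 : ℂ)‖ ^ 2 with hcdef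
  have habs : ∀ n, 0 < ‖ρ n - (d / 2 : ℂ)‖ := fun n => by
    rw [norm_pos_iff]
    exact sub_ne_zero.mpr (hne n)
  have hc0 : ∀ n, 0 ≤ c n := fun n =>
    div_nonneg (by linarith [hre n]) (by positivity)
  have hlow : ∀ T : ℝ, 0 < T → ∀ n, (ρ n).re ≤ d / 2 - ε →
      ‖ρ n - (d / 2 : ℂ)‖ ≤ T → 2 * ε / T ^ 2 ≤ c n := by
    intro T hT n h1 h2
    have hd : (0:ℝ) < ‖ρ n - (d / 2 : ℂ)‖ ^ 2 := pow_pos (habs n) 2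
    exact div_le_div₀ (by linarith) (by linarith) hd (pow_le_pow_left₀ (habs n).le h2 2)
  have hfin : ∀ T : ℝ, 0 < T →
      {n : ℕ | (ρ n).re ≤ d / 2 - ε ∧ ‖ρ n - (d / 2 : ℂ)‖ ≤ T}.Finite := by
    intro T hT
    have h := hsum.tendsto_cofinite_zero
    have h2 := h (Iio_mem_nhds (show (0:ℝ) < 2 * ε / T ^ 2 by positivity))
    rw [Filter.mem_map, Filter.mem_cofinite] at h2
    refine h2.subset ?_
    intro n hn
    have := hlow T hT n hn.1 hn.2
    simp only [Set.mem_compl_iff, Set.mem_preimage, Set.mem_Iio]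
    exact not_lt.mpr this
  refine ⟨hfin, ?_⟩
  rw [NormedAddCommGroup.tendsto_nhds_zero]
  intro δ hδ
  obtain ⟨F, hF⟩ : ∃ F : Finset ℕ, ∑' n : {x // x ∉ F}, c n < ε * δ / 2 := by
    have htail := tendsto_tsum_compl_atTop_zero c
    exact (htail.eventually (gt_mem_nhds (show (0:ℝ) < ε * δ / 2 by positivity))).exists
  have hT2 : Tendsto (fun T : ℝ => (F.card : ℝ) / T ^ 2) atTop (nhds 0) :=
    tendsto_const_nhds.div_atTop (tendsto_pow_atTop two_ne_zero)
  filter_upwards [eventually_ge_atTop (1:ℝ),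
    hT2.eventually (gt_mem_nhds (half_pos hδ))] with T hT1 hTF
  have hT : (0:ℝ) < T := lt_of_lt_of_le one_pos hT1
  have hT2pos : (0:ℝ) < T ^ 2 := by positivity
  set S := {n : ℕ | (ρ n).re ≤ d / 2 - ε ∧ ‖ρ n - (d / 2 : ℂ)‖ ≤ T} with hSdef
  have hSfin : S.Finite := hfin T hT
  set s : Finset ℕ := hSfin.toFinset with hsdef
  have hcard : S.ncard = s.card := Set.ncard_eq_toFinset_card S hSfin
  -- lower bound on the sum over s \ F
  have hsum_low : ((s \ F).card : ℝ) * (2 * ε / T ^ 2) ≤ ∑ n ∈ s \ F, c n := by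
    rw [← nsmul_eq_mul]
    refine Finset.card_nsmul_le_sum _ _ _ ?_
    intro n hn
    have hn' : n ∈ S := hSfin.mem_toFinset.mp (Finset.mem_sdiff.mp hn).1
    exact hlow T hT n hn'.1 hn'.2
  have hsum_up : ∑ n ∈ s \ F, c n ≤ ∑' n : {x // x ∉ F}, c n := by
    calc ∑ n ∈ s \ F, c n = ∑ n ∈ s \ F, Set.indicator {x | x ∉ F} c n := by
          refine Finset.sum_congr rfl fun n hn => ?_
          rw [Set.indicator_of_mem]
          exact (Finset.mem_sdiff.mp hn).2
      _ ≤ ∑' n, Set.indicator {x | x ∉ F} c n :=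
          Summable.sum_le_tsum _ (fun i _ => Set.indicator_nonneg (fun m _ => hc0 m) i)
            (hsum.indicator _)
      _ = ∑' n : {x // x ∉ F}, c n := (tsum_subtype {x | x ∉ F} c).symm
  have hB : ((s \ F).card : ℝ) * (2 * ε / T ^ 2) < ε * δ / 2 :=
    lt_of_le_of_lt (hsum_low.trans hsum_up) hF
  have hBcard : ((s \ F).card : ℝ) / T ^ 2 < δ / 4 := by
    rw [mul_div_assoc'] at hB
    have := (div_lt_iff₀ hT2pos).mp hB
    rw [div_lt_iff₀ hT2pos]
    nlinarith
  have h1 : (s.card : ℝ) ≤ ((s \ F).card : ℝ) + (F.card : ℝ) := by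
    exact_mod_cast Finset.card_le_card_sdiff_add_card
  have hnonneg : (0:ℝ) ≤ (S.ncard : ℝ) / T ^ 2 := by positivity
  rw [Real.norm_of_nonneg hnonneg, hcard]
  calc (s.card : ℝ) / T ^ 2 ≤ (((s \ F).card : ℝ) + (F.card : ℝ)) / T ^ 2 := by
        gcongr
    _ = ((s \ F).card : ℝ) / T ^ 2 + (F.card : ℝ) / T ^ 2 := by ring
    _ < δ / 4 + δ / 2 := add_lt_add hBcard hTF
    _ < δ := by linarith
end
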